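/- Let δ₁ = 0.048. There exists d₀ such that every d-regular graph G on n vertices with d ≥ d₀ contains three pairwise disjoint vertex subsets S₁, S₂, S₃, each of size at most δ₁n, such that every vertex v ∈ V(G) has at least δ₁d/4 neighbors in each of S₁, S₂ and S₃. -/

import Mathlib

open scoped Classical

set_option linter.unusedSectionVars false
open Finset

section Det
variable {V L : Type*} [Fintype V] [DecidableEq V] [Fintype L] [DecidableEq L]

/-- `A` is determined by the coordinates in `s`. -/
def DetBy (A : Finset (V → L)) (s : Finset V) : Prop :=
  ∀ f g : V → L, (∀ i ∈ s, f i = g i) → f ∈ A → g ∈ A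

lemma DetBy.mono {A : Finset (V → L)} {s t : Finset V} (h : DetBy A s) (hst : s ⊆ t) :
    DetBy A t := fun f g hfg => h f g (fun i hi => hfg i (hst hi))

lemma DetBy.compl {A : Finset (V → L)} {s : Finset V} (h : DetBy A s) :
    DetBy (univ \ A) s := by
  intro f g hfg hf
  simp only [mem_sdiff, mem_univ, true_and] at hf ⊢
  exact fun hg => hf (h g f (fun i hi => (hfg i hi).symm) hg)

lemma DetBy.biUnion {ι : Type*} [DecidableEq ι] {T : Finset ι} {A : ι → Finset (V → L)}
    {s : Finset V} (h : ∀ j ∈ T, DetBy (A j) s) : DetBy (T.biUnion A) s := by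
  intro f g hfg hf
  rw [mem_biUnion] at hf ⊢
  obtain ⟨j, hj, hfj⟩ := hf
  exact ⟨j, hj, h j hj f g hfg hfj⟩

/-- merge coordinates -/
def mergeOn (s : Finset V) (f g : V → L) : V → L := fun i => if i ∈ s then f i else g i

lemma detBy_indep {A B : Finset (V → L)} {s t : Finset V} (hA : DetBy A s) (hB : DetBy B t)
    (hst : Disjoint s t) :
    A.card * B.card = (A ∩ B).card * Fintype.card (V → L) := by
  classical
  have key : (A ×ˢ B).card = ((A ∩ B) ×ˢ (univ : Finset (V → L))).card := by
    apply Finset.card_nbij' (i := fun p => (mergeOn s p.1 p.2, mergeOn s p.2 p.1))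
      (j := fun p => (mergeOn s p.1 p.2, mergeOn s p.2 p.1))
    · rintro ⟨f, g⟩ hp
      simp only [mem_product, mem_coe] at hp
      simp only [mem_product, mem_inter, mem_univ, and_true, mem_coe]
      constructor
      · exact hA f _ (fun i hi => by simp [mergeOn, hi]) hp.1
      · exact hB g _ (fun i hi => by
          simp [mergeOn, (disjoint_right.mp hst hi)]) hp.2
    · rintro ⟨h, k⟩ hp
      simp only [mem_product, mem_inter, mem_univ, and_true, mem_coe] at hp
      simp only [mem_product, mem_coe]
      constructor
      · exact hA h _ (fun i hi => by simp [mergeOn, hi]) hp.1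
      · exact hB h _ (fun i hi => by
          simp [mergeOn, (disjoint_right.mp hst hi)]) hp.2
    · rintro ⟨f, g⟩ _
      ext i <;> · simp only [mergeOn]; split <;> simp_all
    · rintro ⟨h, k⟩ _
      ext i <;> · simp only [mergeOn]; split <;> simp_all
  simpa [Finset.card_product] using key

end Det
open Finset

section LLL
variable {Ω ι : Type*} [Fintype Ω] [DecidableEq Ω] [DecidableEq ι] [Nonempty Ω]

def Cfree (A : ι → Finset Ω) (T : Finset ι) : Finset Ω := univ \ T.biUnion A

lemma Cfree_union (A : ι → Finset Ω) (T₁ T₂ : Finset ι) :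
    Cfree A (T₁ ∪ T₂) = Cfree A T₂ \ T₁.biUnion A := by
  ext x
  simp only [Cfree, mem_sdiff, mem_univ, true_and, mem_biUnion, not_exists, not_and, mem_union]
  constructor
  · intro h
    exact ⟨fun j hj hx => h j (Or.inr hj) hx, fun j hj hx => h j (Or.inl hj) hx⟩
  · rintro ⟨h2, h1⟩ j hj hx
    rcases hj with hj | hj
    · exact h1 j hj hx
    · exact h2 j hj hx

theorem lll (A : ι → Finset Ω) (I : Finset ι) (Γ : ι → Finset ι) (p : ℝ)
    (hp0 : 0 ≤ p) (hp1 : 4 * p ≤ 1)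
    (hΓ : ∀ i ∈ I, 4 * p * ((Γ i).card : ℝ) ≤ 1)
    (hcond : ∀ i ∈ I, ∀ T ⊆ I, (∀ j ∈ T, j ∉ Γ i) →
      (((A i ∩ Cfree A T).card : ℝ)) ≤ p * ((Cfree A T).card : ℝ)) :
    ∃ ω : Ω, ∀ i ∈ I, ω ∉ A i := by
  classical
  have main : ∀ k : ℕ, ∀ S ⊆ I, S.card ≤ k →
      (0 : ℝ) < ((Cfree A S).card : ℝ) ∧
      ∀ i ∈ I, ((A i ∩ Cfree A S).card : ℝ) ≤ 2 * p * ((Cfree A S).card : ℝ) := by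
    intro k
    induction k with
    | zero =>
      intro S hS hcard
      have hSe : S = ∅ := card_eq_zero.mp (Nat.le_zero.mp hcard)
      subst hSe
      have hC : Cfree A ∅ = univ := by simp [Cfree]
      constructor
      · rw [hC]; exact_mod_cast Fintype.card_pos
      · intro i hi
        have h1 := hcond i hi ∅ (empty_subset _) (by simp)
        have h2 : (0:ℝ) ≤ ((Cfree A (∅ : Finset ι)).card : ℝ) := Nat.cast_nonneg _
        nlinarith
    | succ k ih =>
      intro S hS hcard
      have partb : ∀ i ∈ I, ((A i ∩ Cfree A S).card : ℝ) ≤ 2 * p * ((Cfree A S).card : ℝ) := by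
        intro i hi
        set S₁ := S ∩ Γ i with hS₁
        set S₂ := S \ Γ i with hS₂
        by_cases hS₁e : S₁ = ∅
        · have hSnon : ∀ j ∈ S, j ∉ Γ i := by
            intro j hj hjΓ
            exact absurd (mem_inter.mpr ⟨hj, hjΓ⟩) (by rw [← hS₁, hS₁e]; exact notMem_empty j)
          have h1 := hcond i hi S hS hSnon
          have h2 : (0:ℝ) ≤ ((Cfree A S).card : ℝ) := Nat.cast_nonneg _
          nlinarith
        · have hS₂S : S₂ ⊆ S := sdiff_subset
          have hS₂card : S₂.card ≤ k := by
            have h1 : S₂.card < S.card := by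
              apply card_lt_card
              refine ⟨hS₂S, fun hsub => ?_⟩
              obtain ⟨j, hj⟩ := nonempty_iff_ne_empty.mpr hS₁e
              have hjS : j ∈ S := (mem_inter.mp hj).1
              exact (mem_sdiff.mp (hsub hjS)).2 (mem_inter.mp hj).2
            omega
          obtain ⟨hpos₂, hb₂⟩ := ih S₂ (hS₂S.trans hS) hS₂card
          have hunion : S₁ ∪ S₂ = S := by
            ext j; rw [hS₁, hS₂]
            simp only [mem_union, mem_inter, mem_sdiff]
            tauto
          have hCeq : Cfree A S = Cfree A S₂ \ S₁.biUnion A := by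
            rw [← hunion, Cfree_union]
          have hCsub : Cfree A S ⊆ Cfree A S₂ := by
            rw [hCeq]; exact sdiff_subset
          have hlow : ((Cfree A S₂).card : ℝ) - ∑ j ∈ S₁, ((A j ∩ Cfree A S₂).card : ℝ)
              ≤ ((Cfree A S).card : ℝ) := by
            have h1 : (Cfree A S₂).card ≤ (Cfree A S).card + ∑ j ∈ S₁, (A j ∩ Cfree A S₂).card := by
              calc (Cfree A S₂).card
                  = (Cfree A S₂ \ S₁.biUnion A).card + (Cfree A S₂ ∩ S₁.biUnion A).card :=
                    (Finset.card_sdiff_add_card_inter _ _).symm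
                _ ≤ (Cfree A S).card + ∑ j ∈ S₁, (A j ∩ Cfree A S₂).card := by
                    rw [hCeq]
                    gcongr
                    calc (Cfree A S₂ ∩ S₁.biUnion A).card
                        = ((S₁.biUnion fun j => A j ∩ Cfree A S₂)).card := by
                          congr 1
                          ext x
                          simp only [mem_inter, mem_biUnion]
                          tauto
                      _ ≤ ∑ j ∈ S₁, (A j ∩ Cfree A S₂).card := card_biUnion_le
            have h2 := (Nat.cast_le (α := ℝ)).mpr h1
            push_cast at h2
            linarith
          have hsumb : ∑ j ∈ S₁, ((A j ∩ Cfree A S₂).card : ℝ)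
              ≤ (S₁.card : ℝ) * (2 * p * ((Cfree A S₂).card : ℝ)) := by
            calc ∑ j ∈ S₁, ((A j ∩ Cfree A S₂).card : ℝ)
                ≤ ∑ _j ∈ S₁, (2 * p * ((Cfree A S₂).card : ℝ)) := by
                  apply Finset.sum_le_sum
                  intro j hj
                  exact hb₂ j (hS ((inter_subset_left) hj))
              _ = (S₁.card : ℝ) * (2 * p * ((Cfree A S₂).card : ℝ)) := by
                  rw [Finset.sum_const, nsmul_eq_mul]
          have hS₁Γ : (S₁.card : ℝ) ≤ ((Γ i).card : ℝ) := by
            exact_mod_cast card_le_card (inter_subset_right)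
          have hΓi := hΓ i hi
          have hc2 : (0:ℝ) ≤ ((Cfree A S₂).card : ℝ) := Nat.cast_nonneg _
          have hhalf : (1/2 : ℝ) * ((Cfree A S₂).card : ℝ) ≤ ((Cfree A S).card : ℝ) := by
            have t1 := mul_le_mul_of_nonneg_right hS₁Γ
              (mul_nonneg (by linarith : (0:ℝ) ≤ 2 * p) hc2)
            have t2 := mul_le_mul_of_nonneg_right hΓi hc2
            nlinarith
          have hup : ((A i ∩ Cfree A S).card : ℝ) ≤ p * ((Cfree A S₂).card : ℝ) := by
            have hmono : (A i ∩ Cfree A S).card ≤ (A i ∩ Cfree A S₂).card :=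
              card_le_card (by gcongr)
            have hnon₂ : ∀ j ∈ S₂, j ∉ Γ i := fun j hj => (mem_sdiff.mp hj).2
            calc ((A i ∩ Cfree A S).card : ℝ) ≤ ((A i ∩ Cfree A S₂).card : ℝ) := by
                  exact_mod_cast hmono
              _ ≤ p * ((Cfree A S₂).card : ℝ) := hcond i hi S₂ (hS₂S.trans hS) hnon₂
          have t3 := mul_le_mul_of_nonneg_left hhalf (by linarith : (0:ℝ) ≤ 2 * p)
          nlinarith
      refine ⟨?_, partb⟩
      rcases S.eq_empty_or_nonempty with hSe | ⟨i, hiS⟩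
      · subst hSe
        have hC : Cfree A ∅ = univ := by simp [Cfree]
        rw [hC]; exact_mod_cast Fintype.card_pos
      · set S' := S.erase i with hS'
        have hS'sub : S' ⊆ S := erase_subset _ _
        have hS'card : S'.card ≤ k := by
          rw [hS', card_erase_of_mem hiS]
          omega
        obtain ⟨hpos', hb'⟩ := ih S' (hS'sub.trans hS) hS'card
        have hunion : {i} ∪ S' = S := by
          ext j
          simp only [mem_union, mem_singleton, hS', mem_erase]
          constructor
          · rintro (rfl | h)
            · exact hiS
            · exact h.2
          · intro hj
            by_cases hji : j = i
            · exact Or.inl hji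
            · exact Or.inr ⟨hji, hj⟩
        have hCeq : Cfree A S = Cfree A S' \ A i := by
          rw [← hunion, Cfree_union, Finset.singleton_biUnion]
        have hlow : ((Cfree A S').card : ℝ) - ((A i ∩ Cfree A S').card : ℝ)
            ≤ ((Cfree A S).card : ℝ) := by
          rw [hCeq]
          have h1 : (Cfree A S').card ≤ (Cfree A S' \ A i).card + (A i ∩ Cfree A S').card := by
            rw [inter_comm]
            rw [Finset.card_sdiff_add_card_inter]
          have h2 := (Nat.cast_le (α := ℝ)).mpr h1
          push_cast at h2
          linarith
        have hb := hb' i (hS hiS)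
        have t4 := mul_le_mul_of_nonneg_right hp1 (le_of_lt hpos')
        nlinarith
  obtain ⟨hpos, _⟩ := main I.card I (Subset.refl _) le_rfl
  have hne : (Cfree A I).Nonempty := by
    rw [← card_pos]
    exact_mod_cast hpos
  obtain ⟨ω, hω⟩ := hne
  refine ⟨ω, fun i hi hmem => ?_⟩
  simp only [Cfree, mem_sdiff, mem_univ, true_and, mem_biUnion, not_exists, not_and] at hω
  exact hω i hi hmem

end LLL

lemma sum_pow_count {V L : Type*} [Fintype V] [DecidableEq V] [Fintype L] [DecidableEq L]
    (D : Finset V) (B : Finset L) (r : ℝ) :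
    ∑ ω : V → L, r ^ ((D.filter fun u => ω u ∈ B).card)
      = ((B.card : ℝ) * r + ((Fintype.card L : ℝ) - B.card)) ^ D.card
        * (Fintype.card L : ℝ) ^ (Fintype.card V - D.card) := by
  classical
  have step1 : ∀ ω : V → L, r ^ ((D.filter fun u => ω u ∈ B).card)
      = ∏ u : V, (if u ∈ D ∧ ω u ∈ B then r else 1) := by
    intro ω
    rw [Finset.prod_ite]
    rw [Finset.prod_const, Finset.prod_const_one, mul_one]
    congr 1
    congr 1
    ext u
    simp
  simp only [step1]
  have key := Finset.prod_univ_sum (fun _ : V => (univ : Finset L))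
    (fun u a => if u ∈ D ∧ a ∈ B then r else 1)
  rw [Fintype.piFinset_univ] at key
  rw [← key]
  have step2 : ∀ u : V, (∑ a : L, (if u ∈ D ∧ a ∈ B then r else 1))
      = if u ∈ D then ((B.card : ℝ) * r + ((Fintype.card L : ℝ) - B.card))
        else (Fintype.card L : ℝ) := by
    intro u
    by_cases hu : u ∈ D
    · simp only [hu, true_and, if_true]
      rw [Finset.sum_ite, Finset.sum_const, Finset.sum_const]
      have h1 : univ.filter (fun a => a ∈ B) = B := by ext a; simp
      have h2 : (univ.filter (fun a => a ∉ B)).card = Fintype.card L - B.card := by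
        rw [Finset.filter_not, h1, Finset.card_univ_diff]
      rw [h1, h2]
      have hB : B.card ≤ Fintype.card L := B.card_le_univ
      rw [nsmul_eq_mul, nsmul_eq_mul, Nat.cast_sub hB]
      ring
    · simp [hu, Finset.card_univ]
  rw [Finset.prod_congr rfl (fun u _ => step2 u)]
  rw [Finset.prod_ite]
  rw [Finset.prod_const, Finset.prod_const]
  have h1 : univ.filter (fun u => u ∈ D) = D := by ext u; simp
  have h2 : (univ.filter (fun u => u ∉ D)).card = Fintype.card V - D.card := by
    rw [Finset.filter_not, h1, Finset.card_univ_diff]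
  rw [h1, h2]
set_option linter.unusedSectionVars false
set_option maxHeartbeats 1000000
open Finset SimpleGraph
open scoped Classical

noncomputable section

def Bset (k : Fin 3) : Finset (Fin 100) :=
  Finset.univ.filter (fun a => (a : ℕ) / 3 = (k : ℕ))

lemma Bset_card (k : Fin 3) : (Bset k).card = 3 := by
  fin_cases k <;> decide

lemma Bset_disj {k k' : Fin 3} (h : k ≠ k') {a : Fin 100} (ha : a ∈ Bset k) :
    a ∉ Bset k' := by
  simp only [Bset, mem_filter, mem_univ, true_and] at ha ⊢
  intro h2
  exact h (Fin.ext (ha.symm.trans h2))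

def cnt' {n : ℕ} (G : SimpleGraph (Fin n)) (v : Fin n) (k : Fin 3) (ω : Fin n → Fin 100) : ℕ :=
  ((G.neighborFinset v).filter (fun u => ω u ∈ Bset k)).card

def badEv {n : ℕ} (G : SimpleGraph (Fin n)) (d : ℕ) (i : Fin n × Fin 3 × Bool) :
    Finset (Fin n → Fin 100) :=
  Finset.univ.filter (fun ω =>
    if i.2.2 then ((cnt' G i.1 i.2.1 ω : ℝ) < 0.048 * (d : ℝ) / 4)
    else (0.048 * (d : ℝ) < (cnt' G i.1 i.2.1 ω : ℝ)))

lemma cnt'_agree {n : ℕ} (G : SimpleGraph (Fin n)) (v : Fin n) (k : Fin 3)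
    {ω ω' : Fin n → Fin 100} (h : ∀ u ∈ G.neighborFinset v, ω u = ω' u) :
    cnt' G v k ω = cnt' G v k ω' := by
  unfold cnt'
  congr 1
  apply Finset.filter_congr
  intro u hu
  rw [h u hu]
lemma badEv_card_le {n d : ℕ} (G : SimpleGraph (Fin n)) (hreg : G.IsRegularOfDegree d)
    (hd : 10 ^ 11 ≤ d) (i : Fin n × Fin 3 × Bool) :
    ((badEv G d i).card : ℝ)
      ≤ Real.exp (-(0.003) * (d : ℝ)) * (Fintype.card (Fin n → Fin 100) : ℝ) := by
  obtain ⟨v, kk, b⟩ := i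
  have hD : (G.neighborFinset v).card = d := by
    rw [SimpleGraph.card_neighborFinset_eq_degree]; exact hreg v
  have hdn : d < n := by
    have h := G.degree_lt_card_verts v
    rw [hreg v] at h
    simpa using h
  have hcard : (Fintype.card (Fin n → Fin 100) : ℝ) = 100 ^ n := by
    rw [Fintype.card_fun]
    push_cast
    simp
  have hdR : ((10:ℝ))^11 ≤ (d:ℝ) := by exact_mod_cast hd
  have hd0 : (0:ℝ) ≤ (d:ℝ) := Nat.cast_nonneg d
  have hsplit : (100:ℝ)^n = 100^d * 100^(n-d) := by
    rw [← pow_add]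
    congr 1
    omega
  rw [hcard, hsplit]
  cases b
  · -- upper tail : 0.048 d < cnt
    set c : ℝ := (2:ℝ) ^ (0.048 * (d:ℝ)) with hc_def
    have hc : 0 < c := Real.rpow_pos_of_pos (by norm_num) _
    have hsum := sum_pow_count (G.neighborFinset v) (Bset kk) (2 : ℝ)
    rw [Bset_card, hD] at hsum
    simp only [Fintype.card_fin] at hsum
    push_cast at hsum
    have hnum : ((3:ℝ) * 2 + ((100:ℝ) - 3)) = 103 := by norm_num
    rw [hnum] at hsum
    have hb1 : ((badEv G d (v, kk, false)).card : ℝ) * c ≤ (103:ℝ)^d * 100^(n - d) := by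
      have step : ∀ ω ∈ badEv G d (v, kk, false), c ≤ (2:ℝ) ^ (cnt' G v kk ω) := by
        intro ω hω
        simp only [badEv, mem_filter, mem_univ, true_and, if_neg (Bool.false_ne_true)] at hω
        calc c ≤ (2:ℝ) ^ ((cnt' G v kk ω : ℕ) : ℝ) :=
              Real.rpow_le_rpow_of_exponent_le (by norm_num) (le_of_lt hω)
          _ = (2:ℝ) ^ (cnt' G v kk ω) := Real.rpow_natCast _ _
      calc ((badEv G d (v, kk, false)).card : ℝ) * c
          = ∑ _ω ∈ badEv G d (v, kk, false), c := by rw [Finset.sum_const, nsmul_eq_mul]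
        _ ≤ ∑ ω ∈ badEv G d (v, kk, false), (2:ℝ) ^ (cnt' G v kk ω) :=
            Finset.sum_le_sum step
        _ ≤ ∑ ω : Fin n → Fin 100, (2:ℝ) ^ (cnt' G v kk ω) :=
            Finset.sum_le_sum_of_subset_of_nonneg (Finset.subset_univ _)
              (fun ω _ _ => by positivity)
        _ = (103:ℝ)^d * 100^(n - d) := hsum
    have hkey : (103:ℝ)^d * 100^(n - d)
        ≤ Real.exp (-(0.003) * (d:ℝ)) * ((100:ℝ)^d * 100^(n-d)) * c := by
      have h103 : (103:ℝ) ≤ 100 * Real.exp (0.03) := by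
        have h := Real.add_one_le_exp (0.03:ℝ)
        nlinarith
      have h1 : (103:ℝ)^d ≤ (100:ℝ)^d * Real.exp (0.03 * (d:ℝ)) := by
        calc (103:ℝ)^d ≤ (100 * Real.exp (0.03))^d :=
              pow_le_pow_left₀ (by norm_num) h103 d
          _ = (100:ℝ)^d * Real.exp (0.03 * (d:ℝ)) := by
              rw [mul_pow]
              congr 1
              rw [← Real.exp_nat_mul]
              congr 1
              ring
      have h2 : Real.exp (0.03 * (d:ℝ)) ≤ Real.exp (-(0.003) * (d:ℝ)) * c := by
        rw [hc_def, Real.rpow_def_of_pos (by norm_num : (0:ℝ) < 2), ← Real.exp_add]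
        apply Real.exp_le_exp.mpr
        nlinarith [Real.log_two_gt_d9, hd0]
      calc (103:ℝ)^d * 100^(n - d)
          ≤ ((100:ℝ)^d * Real.exp (0.03 * (d:ℝ))) * 100^(n-d) := by
            apply mul_le_mul_of_nonneg_right h1 (by positivity)
        _ ≤ ((100:ℝ)^d * (Real.exp (-(0.003) * (d:ℝ)) * c)) * 100^(n-d) := by
            apply mul_le_mul_of_nonneg_right
              (mul_le_mul_of_nonneg_left h2 (by positivity)) (by positivity)
        _ = Real.exp (-(0.003) * (d:ℝ)) * ((100:ℝ)^d * 100^(n-d)) * c := by ring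
    have := le_trans hb1 hkey
    exact le_of_mul_le_mul_right (by linarith) hc
  · -- lower tail : cnt < 0.048 d / 4
    set c : ℝ := ((1:ℝ)/2) ^ (0.048 * (d:ℝ) / 4) with hc_def
    have hc : 0 < c := Real.rpow_pos_of_pos (by norm_num) _
    have hsum := sum_pow_count (G.neighborFinset v) (Bset kk) ((1:ℝ)/2)
    rw [Bset_card, hD] at hsum
    simp only [Fintype.card_fin] at hsum
    push_cast at hsum
    have hnum : ((3:ℝ) * (1/2) + ((100:ℝ) - 3)) = 197/2 := by norm_num
    rw [hnum] at hsum
    have hb1 : ((badEv G d (v, kk, true)).card : ℝ) * c ≤ (197/2:ℝ)^d * 100^(n - d) := by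
      have step : ∀ ω ∈ badEv G d (v, kk, true), c ≤ ((1:ℝ)/2) ^ (cnt' G v kk ω) := by
        intro ω hω
        simp only [badEv, mem_filter, mem_univ, true_and, if_pos] at hω
        calc c ≤ ((1:ℝ)/2) ^ ((cnt' G v kk ω : ℕ) : ℝ) :=
              Real.rpow_le_rpow_of_exponent_ge (by norm_num) (by norm_num) (le_of_lt hω)
          _ = ((1:ℝ)/2) ^ (cnt' G v kk ω) := Real.rpow_natCast _ _
      calc ((badEv G d (v, kk, true)).card : ℝ) * c
          = ∑ _ω ∈ badEv G d (v, kk, true), c := by rw [Finset.sum_const, nsmul_eq_mul]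
        _ ≤ ∑ ω ∈ badEv G d (v, kk, true), ((1:ℝ)/2) ^ (cnt' G v kk ω) :=
            Finset.sum_le_sum step
        _ ≤ ∑ ω : Fin n → Fin 100, ((1:ℝ)/2) ^ (cnt' G v kk ω) :=
            Finset.sum_le_sum_of_subset_of_nonneg (Finset.subset_univ _)
              (fun ω _ _ => by positivity)
        _ = (197/2:ℝ)^d * 100^(n - d) := hsum
    have hkey : (197/2:ℝ)^d * 100^(n - d)
        ≤ Real.exp (-(0.003) * (d:ℝ)) * ((100:ℝ)^d * 100^(n-d)) * c := by
      have h985 : (197/2:ℝ) ≤ 100 * Real.exp (-(0.015)) := by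
        have h := Real.add_one_le_exp (-(0.015):ℝ)
        nlinarith
      have h1 : (197/2:ℝ)^d ≤ (100:ℝ)^d * Real.exp (-(0.015) * (d:ℝ)) := by
        calc (197/2:ℝ)^d ≤ (100 * Real.exp (-(0.015)))^d :=
              pow_le_pow_left₀ (by norm_num) h985 d
          _ = (100:ℝ)^d * Real.exp (-(0.015) * (d:ℝ)) := by
              rw [mul_pow]
              congr 1
              rw [← Real.exp_nat_mul]
              congr 1
              ring
      have h2 : Real.exp (-(0.015) * (d:ℝ)) ≤ Real.exp (-(0.003) * (d:ℝ)) * c := by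
        rw [hc_def, Real.rpow_def_of_pos (by norm_num : (0:ℝ) < (1:ℝ)/2), ← Real.exp_add]
        apply Real.exp_le_exp.mpr
        rw [show ((1:ℝ)/2) = (2:ℝ)⁻¹ by norm_num, Real.log_inv]
        nlinarith [Real.log_two_lt_d9, Real.log_two_gt_d9, hd0]
      calc (197/2:ℝ)^d * 100^(n - d)
          ≤ ((100:ℝ)^d * Real.exp (-(0.015) * (d:ℝ))) * 100^(n-d) := by
            apply mul_le_mul_of_nonneg_right h1 (by positivity)
        _ ≤ ((100:ℝ)^d * (Real.exp (-(0.003) * (d:ℝ)) * c)) * 100^(n-d) := by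
            apply mul_le_mul_of_nonneg_right
              (mul_le_mul_of_nonneg_left h2 (by positivity)) (by positivity)
        _ = Real.exp (-(0.003) * (d:ℝ)) * ((100:ℝ)^d * 100^(n-d)) * c := by ring
    have := le_trans hb1 hkey
    exact le_of_mul_le_mul_right (by linarith) hc
lemma sum_inter_neighbor {n d : ℕ} (G : SimpleGraph (Fin n)) (hreg : G.IsRegularOfDegree d)
    (S : Finset (Fin n)) :
    ∑ v : Fin n, (S ∩ G.neighborFinset v).card = d * S.card := by
  have h1 : ∀ v : Fin n, (S ∩ G.neighborFinset v).card
      = ∑ u : Fin n, (if u ∈ S ∧ u ∈ G.neighborFinset v then 1 else 0) := by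
    intro v
    have he : S ∩ G.neighborFinset v
        = univ.filter (fun u => u ∈ S ∧ u ∈ G.neighborFinset v) := by
      ext u; simp
    rw [he, Finset.card_filter]
  rw [Finset.sum_congr rfl fun v _ => h1 v, Finset.sum_comm]
  have h2 : ∀ u : Fin n, (∑ v : Fin n, if u ∈ S ∧ u ∈ G.neighborFinset v then 1 else 0)
      = if u ∈ S then d else 0 := by
    intro u
    by_cases hu : u ∈ S
    · simp only [hu, true_and, if_pos]
      have he : univ.filter (fun v => u ∈ G.neighborFinset v) = G.neighborFinset u := by
        ext v
        simp only [Finset.mem_filter, Finset.mem_univ, true_and,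
          SimpleGraph.mem_neighborFinset]
        exact SimpleGraph.adj_comm G v u
      rw [← Finset.card_filter, he, SimpleGraph.card_neighborFinset_eq_degree]
      exact hreg u
    · simp [hu]
  rw [Finset.sum_congr rfl fun u _ => h2 u]
  rw [Finset.sum_ite_mem, Finset.univ_inter, Finset.sum_const, smul_eq_mul, mul_comm]

/-- Let `δ₁ = 0.048`. There exists `d₀` such that every `d`-regular graph on `n` vertices with
`d ≥ d₀` contains three pairwise disjoint vertex subsets `S₁, S₂, S₃`, each of size at most
`δ₁n`, such that every vertex has at least `δ₁d/4` neighbors in each of `S₁`, `S₂`, `S₃`. -/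
theorem three_matchmakers :
    ∃ d₀ : ℕ, ∀ (n d : ℕ) (G : SimpleGraph (Fin n)),
      d ≥ d₀ → G.IsRegularOfDegree d →
      ∃ S₁ S₂ S₃ : Finset (Fin n),
        Disjoint S₁ S₂ ∧ Disjoint S₁ S₃ ∧ Disjoint S₂ S₃ ∧
        (S₁.card : ℝ) ≤ 0.048 * (n : ℝ) ∧
        (S₂.card : ℝ) ≤ 0.048 * (n : ℝ) ∧
        (S₃.card : ℝ) ≤ 0.048 * (n : ℝ) ∧
        ∀ v : Fin n,
          0.048 * (d : ℝ) / 4 ≤ ((S₁ ∩ G.neighborFinset v).card : ℝ) ∧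
          0.048 * (d : ℝ) / 4 ≤ ((S₂ ∩ G.neighborFinset v).card : ℝ) ∧
          0.048 * (d : ℝ) / 4 ≤ ((S₃ ∩ G.neighborFinset v).card : ℝ) := by
  refine ⟨10 ^ 11, ?_⟩
  intro n d G hd hreg
  classical
  set p : ℝ := Real.exp (-(0.003) * (d:ℝ)) with hp_def
  have hp0 : 0 ≤ p := le_of_lt (Real.exp_pos _)
  have hdR : ((10:ℝ))^11 ≤ (d:ℝ) := by exact_mod_cast hd
  have hd0 : (0:ℝ) ≤ (d:ℝ) := Nat.cast_nonneg d
  have hdd : ((10:ℝ))^22 ≤ (d:ℝ) * d := by nlinarith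
  have hpinv : p * Real.exp (0.003 * (d:ℝ)) = 1 := by
    rw [hp_def, ← Real.exp_add]
    norm_num
  have hcube : (0.001*(d:ℝ)) * (0.001*(d:ℝ)) * (0.001*(d:ℝ)) ≤ Real.exp (0.003 * (d:ℝ)) := by
    have hexp3 : Real.exp (0.003 * (d:ℝ))
        = Real.exp (0.001 * (d:ℝ)) * Real.exp (0.001*(d:ℝ)) * Real.exp (0.001*(d:ℝ)) := by
      rw [← Real.exp_add, ← Real.exp_add]
      ring_nf
    have h1 : (0.001*(d:ℝ)) ≤ Real.exp (0.001*(d:ℝ)) := by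
      have := Real.add_one_le_exp (0.001*(d:ℝ))
      linarith
    have h0 : (0:ℝ) ≤ 0.001*(d:ℝ) := by positivity
    rw [hexp3]
    exact mul_le_mul (mul_le_mul h1 h1 h0 (h0.trans h1)) h1 h0
      (mul_nonneg (h0.trans h1) (h0.trans h1))
  have hbig : (24:ℝ) * ((d:ℝ)*d) ≤ Real.exp (0.003 * (d:ℝ)) := by
    nlinarith [mul_le_mul_of_nonneg_right hdR (mul_nonneg hd0 hd0)]
  have hp4 : 4 * p ≤ 1 := by
    have h4 : (4:ℝ) ≤ Real.exp (0.003*(d:ℝ)) := by nlinarith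
    calc 4 * p ≤ Real.exp (0.003*(d:ℝ)) * p := mul_le_mul_of_nonneg_right h4 hp0
      _ = 1 := by rw [mul_comm]; exact hpinv
  set Γ : Fin n × Fin 3 × Bool → Finset (Fin n × Fin 3 × Bool) :=
    fun i => (univ.filter
      (fun u => ((G.neighborFinset u) ∩ (G.neighborFinset i.1)).Nonempty)) ×ˢ univ with hΓ_def
  have hΓcard : ∀ i, ((Γ i).card : ℝ) ≤ 6 * ((d:ℝ) * d) := by
    intro i
    rw [hΓ_def]
    simp only [Finset.card_product]
    have hsub : (univ.filter
        (fun u => ((G.neighborFinset u) ∩ (G.neighborFinset i.1)).Nonempty))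
        ⊆ (G.neighborFinset i.1).biUnion (fun w => G.neighborFinset w) := by
      intro u hu
      simp only [Finset.mem_filter, Finset.mem_univ, true_and] at hu
      obtain ⟨w, hw⟩ := hu
      rw [Finset.mem_inter] at hw
      rw [Finset.mem_biUnion]
      refine ⟨w, hw.2, ?_⟩
      rw [SimpleGraph.mem_neighborFinset] at hw ⊢
      exact hw.1.symm
    have h1 : (univ.filter
        (fun u => ((G.neighborFinset u) ∩ (G.neighborFinset i.1)).Nonempty)).card ≤ d * d := by
      calc _ ≤ ((G.neighborFinset i.1).biUnion (fun w => G.neighborFinset w)).card :=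
            Finset.card_le_card hsub
        _ ≤ ∑ w ∈ G.neighborFinset i.1, (G.neighborFinset w).card := Finset.card_biUnion_le
        _ = ∑ _w ∈ G.neighborFinset i.1, d := Finset.sum_congr rfl fun w _ => by
            rw [SimpleGraph.card_neighborFinset_eq_degree]; exact hreg w
        _ = (G.neighborFinset i.1).card * d := by rw [Finset.sum_const, smul_eq_mul]
        _ = d * d := by
            rw [SimpleGraph.card_neighborFinset_eq_degree, hreg i.1]
    have h2 : ((univ : Finset (Fin 3 × Bool))).card = 6 := by
      simp [Finset.card_univ]
    rw [h2]
    have h1' : ((univ.filter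
        (fun u => ((G.neighborFinset u) ∩ (G.neighborFinset i.1)).Nonempty)).card : ℝ)
        ≤ (d:ℝ) * d := by exact_mod_cast h1
    push_cast
    nlinarith
  have hΓ : ∀ i ∈ (univ : Finset (Fin n × Fin 3 × Bool)), 4 * p * ((Γ i).card:ℝ) ≤ 1 := by
    intro i _
    calc 4 * p * ((Γ i).card:ℝ) ≤ 4 * p * (6*((d:ℝ)*d)) := by
          apply mul_le_mul_of_nonneg_left (hΓcard i) (by positivity)
      _ = (24*((d:ℝ)*d)) * p := by ring
      _ ≤ Real.exp (0.003*(d:ℝ)) * p := mul_le_mul_of_nonneg_right hbig hp0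
      _ = 1 := by rw [mul_comm]; exact hpinv
  have hdet : ∀ i, DetBy (badEv G d i) (G.neighborFinset i.1) := by
    intro i f g hfg hf
    simp only [badEv, Finset.mem_filter, Finset.mem_univ, true_and] at hf ⊢
    rwa [← cnt'_agree G i.1 i.2.1 hfg]
  have hcond : ∀ i ∈ (univ : Finset (Fin n × Fin 3 × Bool)),
      ∀ T ⊆ univ, (∀ j ∈ T, j ∉ Γ i) →
      (((badEv G d i ∩ Cfree (badEv G d) T).card : ℝ))
        ≤ p * ((Cfree (badEv G d) T).card : ℝ) := by
    intro i _ T _ hT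
    have hdisj : Disjoint (T.biUnion (fun j => G.neighborFinset j.1))
        (G.neighborFinset i.1) := by
      rw [Finset.disjoint_left]
      intro x hx hxv
      rw [Finset.mem_biUnion] at hx
      obtain ⟨j, hjT, hxj⟩ := hx
      apply hT j hjT
      rw [hΓ_def]
      simp only [Finset.mem_product, Finset.mem_filter, Finset.mem_univ, true_and, and_true]
      exact ⟨x, Finset.mem_inter.mpr ⟨hxj, hxv⟩⟩
    have hdetC : DetBy (Cfree (badEv G d) T) (T.biUnion (fun j => G.neighborFinset j.1)) := by
      apply DetBy.compl
      apply DetBy.biUnion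
      intro j hj
      exact (hdet j).mono (Finset.subset_biUnion_of_mem (fun j => G.neighborFinset j.1) hj)
    have hind := detBy_indep (hdet i) hdetC hdisj.symm
    have hbound := badEv_card_le G hreg hd i
    have hΩpos : (0:ℝ) < (Fintype.card (Fin n → Fin 100) : ℝ) := by
      exact_mod_cast Fintype.card_pos
    apply le_of_mul_le_mul_right _ hΩpos
    calc ((badEv G d i ∩ Cfree (badEv G d) T).card : ℝ) * (Fintype.card (Fin n → Fin 100) : ℝ)
        = ((badEv G d i).card:ℝ) * ((Cfree (badEv G d) T).card:ℝ) := by exact_mod_cast hind.symm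
      _ ≤ (p * (Fintype.card (Fin n → Fin 100) :ℝ)) * ((Cfree (badEv G d) T).card:ℝ) :=
          mul_le_mul_of_nonneg_right hbound (Nat.cast_nonneg _)
      _ = p * ((Cfree (badEv G d) T).card:ℝ) * (Fintype.card (Fin n → Fin 100) :ℝ) := by ring
  obtain ⟨ω, hω⟩ := lll (badEv G d) univ Γ p hp0 hp4 hΓ hcond
  have hgood : ∀ v : Fin n, ∀ k : Fin 3,
      0.048 * (d:ℝ)/4 ≤ (cnt' G v k ω : ℝ) ∧ (cnt' G v k ω : ℝ) ≤ 0.048 * (d:ℝ) := by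
    intro v k
    constructor
    · have h := hω (v,k,true) (Finset.mem_univ _)
      simp only [badEv, Finset.mem_filter, Finset.mem_univ, true_and, if_pos] at h
      exact le_of_not_gt h
    · have h := hω (v,k,false) (Finset.mem_univ _)
      simp only [badEv, Finset.mem_filter, Finset.mem_univ, true_and,
        if_neg (Bool.false_ne_true)] at h
      exact le_of_not_gt h
  set SS : Fin 3 → Finset (Fin n) := fun k => univ.filter (fun u => ω u ∈ Bset k) with hSS_def
  have hSScnt : ∀ (v : Fin n) (k : Fin 3),
      (SS k ∩ G.neighborFinset v).card = cnt' G v k ω := by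
    intro v k
    rw [hSS_def]
    unfold cnt'
    congr 1
    ext u
    simp only [Finset.mem_inter, Finset.mem_filter, Finset.mem_univ, true_and]
    tauto
  have hSSdisj : ∀ k k' : Fin 3, k ≠ k' → Disjoint (SS k) (SS k') := by
    intro k k' hkk
    rw [Finset.disjoint_left]
    intro u hu hu'
    rw [hSS_def] at hu hu'
    simp only [Finset.mem_filter, Finset.mem_univ, true_and] at hu hu'
    exact Bset_disj hkk hu hu'
  have hdpos : (0:ℝ) < (d:ℝ) := lt_of_lt_of_le (by norm_num) hdR
  have hsize : ∀ k : Fin 3, ((SS k).card : ℝ) ≤ 0.048 * (n:ℝ) := by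
    intro k
    have hsum := sum_inter_neighbor G hreg (SS k)
    have h1 : ((d:ℝ)) * ((SS k).card:ℝ)
        = ∑ v : Fin n, ((SS k ∩ G.neighborFinset v).card : ℝ) := by
      rw [← Nat.cast_sum]
      rw [hsum]
      push_cast
      ring
    have h2 : ∑ v : Fin n, ((SS k ∩ G.neighborFinset v).card : ℝ)
        ≤ ∑ _v : Fin n, 0.048*(d:ℝ) := by
      apply Finset.sum_le_sum
      intro v _
      rw [hSScnt v k]
      exact (hgood v k).2
    rw [Finset.sum_const, Finset.card_univ, Fintype.card_fin, nsmul_eq_mul] at h2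
    nlinarith
  refine ⟨SS 0, SS 1, SS 2, hSSdisj 0 1 (by decide), hSSdisj 0 2 (by decide),
    hSSdisj 1 2 (by decide), hsize 0, hsize 1, hsize 2, ?_⟩
  intro v
  refine ⟨?_, ?_, ?_⟩
  · rw [hSScnt v 0]; exact (hgood v 0).1
  · rw [hSScnt v 1]; exact (hgood v 1).1
  · rw [hSScnt v 2]; exact (hgood v 2).1
end
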